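/- Let L be an invertible linear map on 𝒮ⁿ with L(CPₙ) ⊆ CPₙ. If L is a standard map (L(X) = RXRᵗ for some fixed R ∈ Mₙ(ℝ)), then there exist matrices A₁, B₁ ∈ Mₙ(ℝ) with A₁ entrywise nonnegative and B₁ = A₁ᵗ/2 such that L(X) = A₁XB₁ + B₁ᵗXA₁ᵗ for all X. Conversely, for n ≤ 4, if L(X) = AXB + BᵗXAᵗ for some A, B ∈ Mₙ(ℝ) with B invertible, then L is a standard map. -/

import Mathlib

open Matrix

/-- The space `𝒮ⁿ` of `n × n` real symmetric matrices, as a submodule of the matrices. -/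
def SymMat (n : ℕ) : Submodule ℝ (Matrix (Fin n) (Fin n) ℝ) where
  carrier := {A | A.IsSymm}
  add_mem' ha hb := ha.add hb
  zero_mem' := Matrix.isSymm_zero
  smul_mem' c A hA := hA.smul c

/-- The cone `CPₙ` of completely positive matrices in `𝒮ⁿ`. -/
def CPcone (n : ℕ) : Set (SymMat n) :=
  {A | ∃ (m : ℕ) (B : Matrix (Fin n) (Fin m) ℝ), (∀ i j, 0 ≤ B i j) ∧
    (A : Matrix (Fin n) (Fin n) ℝ) = B * Bᵀ}

/-! ### auxiliary lemmas -/

lemma aux_sqmat_isSymm {n : ℕ} (x : Fin n → ℝ) :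
    (Matrix.of fun i j => x i * x j : Matrix (Fin n) (Fin n) ℝ).IsSymm := by
  ext i j; simp [Matrix.transpose_apply, mul_comm]

lemma aux_mul_sqmat_mul {n : ℕ} (A B : Matrix (Fin n) (Fin n) ℝ) (x : Fin n → ℝ) :
    A * (Matrix.of fun i j => x i * x j) * B
      = Matrix.of (fun k l => (A *ᵥ x) k * (Bᵀ *ᵥ x) l) := by
  ext k l
  simp only [Matrix.mul_apply, Matrix.of_apply, Matrix.transpose_apply, Matrix.mulVec,
    dotProduct]
  rw [Finset.sum_mul_sum]
  simp only [Finset.sum_mul]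
  rw [Finset.sum_comm]
  refine Finset.sum_congr rfl fun a _ => Finset.sum_congr rfl fun b _ => by ring

lemma aux_conj_sqmat {n : ℕ} (R : Matrix (Fin n) (Fin n) ℝ) (x : Fin n → ℝ) :
    R * (Matrix.of fun i j => x i * x j) * Rᵀ
      = Matrix.of (fun k l => (R *ᵥ x) k * (R *ᵥ x) l) := by
  rw [aux_mul_sqmat_mul, Matrix.transpose_transpose]

lemma aux_sqmat_mem_CP {n : ℕ} (x : Fin n → ℝ) (hx : ∀ k, 0 ≤ x k) :
    (⟨Matrix.of fun i j => x i * x j, aux_sqmat_isSymm x⟩ : SymMat n) ∈ CPcone n := by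
  refine ⟨1, Matrix.of (fun i _ => x i), fun i j => hx i, ?_⟩
  ext i j
  simp [Matrix.mul_apply]

lemma aux_cp_entry_nonneg {n : ℕ} {A : SymMat n} (hA : A ∈ CPcone n) (k l : Fin n) :
    0 ≤ (A : Matrix (Fin n) (Fin n) ℝ) k l := by
  obtain ⟨m, C, hC, hEq⟩ := hA
  rw [hEq, Matrix.mul_apply]
  exact Finset.sum_nonneg fun a _ => mul_nonneg (hC k a) (hC l a)

lemma aux_cp_quadform {n : ℕ} {A : SymMat n} (hA : A ∈ CPcone n) (z : Fin n → ℝ) :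
    0 ≤ ∑ k, ∑ l, z k * ((A : Matrix (Fin n) (Fin n) ℝ) k l * z l) := by
  obtain ⟨m, C, hC, hEq⟩ := hA
  rw [hEq]
  have key : ∑ k, ∑ l, z k * ((C * Cᵀ) k l * z l)
      = ∑ a, (∑ k, z k * C k a) * (∑ l, z l * C l a) := by
    simp only [Matrix.mul_apply, Matrix.transpose_apply, Finset.mul_sum, Finset.sum_mul]
    rw [Finset.sum_comm]
    conv_lhs => enter [2, l]; rw [Finset.sum_comm]
    rw [Finset.sum_comm]
    exact Finset.sum_congr rfl fun a _ => Finset.sum_congr rfl fun l _ =>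
      Finset.sum_congr rfl fun k _ => by ring
  rw [key]
  exact Finset.sum_nonneg fun a _ => mul_self_nonneg _

/-- key sign lemma for part 1 -/
lemma aux_signed_ratio {n : ℕ} (u d : Fin n → ℝ) (hu : ∀ k, 0 ≤ u k) (hd : ∀ k, 0 ≤ d k)
    (hd0 : d ≠ 0)
    (h : ∀ t : ℝ, 0 < t → (∀ k, 0 ≤ u k - t * d k) ∨ (∀ k, u k - t * d k ≤ 0)) :
    ∃ r : ℝ, 0 ≤ r ∧ u = fun k => r * d k := by
  obtain ⟨k₁, hk₁⟩ : ∃ k, d k ≠ 0 := Function.ne_iff.mp hd0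
  have hk₁' : 0 < d k₁ := lt_of_le_of_ne (hd k₁) (Ne.symm hk₁)
  have stepA : ∀ k, d k = 0 → u k = 0 := by
    intro k₀ hdk0
    by_contra hne
    have hu0 : 0 < u k₀ := lt_of_le_of_ne (hu k₀) (Ne.symm hne)
    have htpos : (0:ℝ) < u k₁ / d k₁ + 1 := by have := div_nonneg (hu k₁) hk₁'.le; linarith
    have hmul : (u k₁ / d k₁ + 1) * d k₁ = u k₁ + d k₁ := by field_simp
    rcases h _ htpos with h1 | h1
    · have := h1 k₁
      rw [hmul] at this
      linarith
    · have := h1 k₀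
      rw [hdk0, mul_zero, sub_zero] at this
      linarith
  have stepB : ∀ k k', 0 < d k → 0 < d k' → u k * d k' ≤ u k' * d k := by
    intro k k' hk hk'
    by_contra hlt
    push_neg at hlt
    set t := (u k / d k + u k' / d k') / 2 with ht
    have hr : u k' / d k' < u k / d k := by
      rw [div_lt_div_iff₀ hk' hk]; linarith
    have ht1 : u k' / d k' < t := by rw [ht]; linarith
    have ht2 : t < u k / d k := by rw [ht]; linarith
    have htpos : 0 < t := lt_of_le_of_lt (div_nonneg (hu k') hk'.le) ht1
    rcases h t htpos with h1 | h1
    · have h2 := h1 k'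
      have h3 : u k' < t * d k' := (div_lt_iff₀ hk').mp ht1
      linarith
    · have h2 := h1 k
      have h3 : t * d k < u k := (lt_div_iff₀ hk).mp ht2
      linarith
  have stepB' : ∀ k k', 0 < d k → 0 < d k' → u k * d k' = u k' * d k :=
    fun k k' hk hk' => le_antisymm (stepB k k' hk hk') (by linarith [stepB k' k hk' hk])
  refine ⟨u k₁ / d k₁, div_nonneg (hu k₁) hk₁'.le, funext fun k => ?_⟩
  rcases eq_or_lt_of_le (hd k) with hdk | hdk
  · rw [stepA k hdk.symm, ← hdk]
    ring
  · have hB := stepB' k k₁ hdk hk₁'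
    field_simp
    linarith
lemma aux_parallel {n : ℕ} (u v : Fin n → ℝ) (hv : v ≠ 0)
    (h : ∀ z : Fin n → ℝ, 0 ≤ (z ⬝ᵥ u) * (z ⬝ᵥ v)) :
    ∃ c : ℝ, 0 ≤ c ∧ u = c • v := by
  have hvv : 0 < v ⬝ᵥ v :=
    lt_of_le_of_ne (Finset.sum_nonneg fun i _ => mul_self_nonneg _)
      (Ne.symm fun h0 => hv (dotProduct_self_eq_zero.mp h0))
  set c : ℝ := (u ⬝ᵥ v) / (v ⬝ᵥ v) with hc
  have huv : 0 ≤ u ⬝ᵥ v := by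
    have hcomm : v ⬝ᵥ u = u ⬝ᵥ v := dotProduct_comm v u
    have := h v
    nlinarith
  refine ⟨c, div_nonneg huv hvv.le, ?_⟩
  set w : Fin n → ℝ := u - c • v with hw
  have hwv : w ⬝ᵥ v = 0 := by
    rw [hw, sub_dotProduct, smul_dotProduct, smul_eq_mul, hc,
      div_mul_cancel₀ _ hvv.ne']
    ring
  by_contra hne
  have hw0 : w ≠ 0 := by
    intro h0
    apply hne
    have : u = c • v + w := by rw [hw]; abel
    rw [this, h0, add_zero]
  have hww : 0 < w ⬝ᵥ w :=
    lt_of_le_of_ne (Finset.sum_nonneg fun i _ => mul_self_nonneg _)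
      (Ne.symm fun h0 => hw0 (dotProduct_self_eq_zero.mp h0))
  set b : ℝ := u ⬝ᵥ v with hb
  set s : ℝ := -(w ⬝ᵥ w) / (2 * |b| + 1) with hs
  have hden : (0:ℝ) < 2 * |b| + 1 := by positivity
  have hsneg : s < 0 := div_neg_of_neg_of_pos (by linarith) hden
  have hsden : s * (2 * |b| + 1) = -(w ⬝ᵥ w) := div_mul_cancel₀ _ hden.ne'
  set z : Fin n → ℝ := w + s • v with hz
  have hzv : z ⬝ᵥ v = s * (v ⬝ᵥ v) := by
    rw [hz, add_dotProduct, smul_dotProduct, hwv, zero_add, smul_eq_mul]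
  have hzu : z ⬝ᵥ u = w ⬝ᵥ w + s * b := by
    have hcv : c * (v ⬝ᵥ v) = b := by rw [hc]; field_simp
    have hvw : v ⬝ᵥ w = 0 := by rw [dotProduct_comm]; exact hwv
    have hu' : u = w + c • v := by rw [hw]; abel
    rw [hz, hu', add_dotProduct, dotProduct_add, dotProduct_add, smul_dotProduct,
      smul_dotProduct, dotProduct_smul, dotProduct_smul, hwv, hvw]
    simp only [smul_eq_mul, mul_zero, add_zero, zero_add]
    rw [hcv]
  have hzupos : 0 < z ⬝ᵥ u := by
    rw [hzu]
    nlinarith [le_abs_self b, neg_abs_le b, hww]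
  have hzvneg : z ⬝ᵥ v < 0 := by
    rw [hzv]; exact mul_neg_of_neg_of_pos hsneg hvv
  have := h z
  nlinarith

lemma aux_col {n : ℕ} (M : Matrix (Fin n) (Fin n) ℝ) (i : Fin n) :
    M *ᵥ Pi.single i 1 = fun k => M k i := by
  funext k; simp [Matrix.mulVec_single]

lemma aux_single_nonneg {n : ℕ} (i k : Fin n) : (0:ℝ) ≤ (Pi.single i 1 : Fin n → ℝ) k := by
  rcases eq_or_ne k i with h | h <;> simp [Pi.single_apply, h]

lemma aux_half {n : ℕ} (A₁ M : Matrix (Fin n) (Fin n) ℝ) :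
    A₁ * M * ((2:ℝ)⁻¹ • A₁ᵀ) + ((2:ℝ)⁻¹ • A₁ᵀ)ᵀ * M * A₁ᵀ = A₁ * M * A₁ᵀ := by
  rw [Matrix.transpose_smul, Matrix.transpose_transpose, Matrix.mul_smul,
    Matrix.smul_mul, Matrix.smul_mul, ← add_smul]
  norm_num

theorem stmt_7 {n : ℕ} (L : SymMat n →ₗ[ℝ] SymMat n) (hinv : Function.Bijective L)
    (hL : ∀ X ∈ CPcone n, L X ∈ CPcone n) :
    ((∃ R : Matrix (Fin n) (Fin n) ℝ, ∀ X : SymMat n,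
        (L X : Matrix (Fin n) (Fin n) ℝ) = R * (X : Matrix (Fin n) (Fin n) ℝ) * Rᵀ) →
      ∃ A₁ B₁ : Matrix (Fin n) (Fin n) ℝ, (∀ i j, 0 ≤ A₁ i j) ∧ B₁ = (2 : ℝ)⁻¹ • A₁ᵀ ∧
        ∀ X : SymMat n, (L X : Matrix (Fin n) (Fin n) ℝ) =
          A₁ * (X : Matrix (Fin n) (Fin n) ℝ) * B₁ + B₁ᵀ * (X : Matrix (Fin n) (Fin n) ℝ) * A₁ᵀ) ∧
    (n ≤ 4 →
      (∃ A B : Matrix (Fin n) (Fin n) ℝ, IsUnit B ∧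
        ∀ X : SymMat n, (L X : Matrix (Fin n) (Fin n) ℝ) =
          A * (X : Matrix (Fin n) (Fin n) ℝ) * B + Bᵀ * (X : Matrix (Fin n) (Fin n) ℝ) * Aᵀ) →
      ∃ R : Matrix (Fin n) (Fin n) ℝ, ∀ X : SymMat n,
        (L X : Matrix (Fin n) (Fin n) ℝ) = R * (X : Matrix (Fin n) (Fin n) ℝ) * Rᵀ) := by
  constructor
  · rintro ⟨R, hstd⟩
    have signed : ∀ x : Fin n → ℝ, (∀ k, 0 ≤ x k) →
        (∀ k, 0 ≤ (R *ᵥ x) k) ∨ (∀ k, (R *ᵥ x) k ≤ 0) := by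
      intro x hx
      have hmem := hL _ (aux_sqmat_mem_CP x hx)
      have hentries : ∀ k l, 0 ≤ (R *ᵥ x) k * (R *ᵥ x) l := by
        intro k l
        have h0 := aux_cp_entry_nonneg hmem k l
        have hco : ((⟨Matrix.of fun i j => x i * x j, aux_sqmat_isSymm x⟩ : SymMat n) :
            Matrix (Fin n) (Fin n) ℝ) = Matrix.of fun i j => x i * x j := rfl
        rw [hstd, hco, aux_conj_sqmat] at h0
        exact h0
      by_cases hp : ∀ k, 0 ≤ (R *ᵥ x) k
      · exact Or.inl hp
      · push_neg at hp
        obtain ⟨k0, hk0⟩ := hp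
        refine Or.inr fun k => ?_
        nlinarith [hentries k0 k]
    have hRinj : ∀ v : Fin n → ℝ, R *ᵥ v = 0 → v = 0 := by
      intro v hv0
      set X : SymMat n := ⟨Matrix.of fun i j => v i * v j, aux_sqmat_isSymm v⟩ with hX
      have hLX : (L X : Matrix (Fin n) (Fin n) ℝ) = 0 := by
        rw [hstd]
        have hco : ((X : SymMat n) : Matrix (Fin n) (Fin n) ℝ)
            = Matrix.of fun i j => v i * v j := rfl
        rw [hco, aux_conj_sqmat, hv0]
        ext k l; simp
      have hX0 : X = 0 := hinv.1 (by rw [map_zero]; exact Subtype.ext hLX)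
      funext k
      have hkk : v k * v k = 0 := by
        have := congrArg (fun Y : SymMat n => (Y : Matrix (Fin n) (Fin n) ℝ) k k) hX0
        simpa [hX] using this
      exact mul_self_eq_zero.mp hkk
    have colsigned : ∀ i : Fin n, (∀ k, 0 ≤ R k i) ∨ (∀ k, R k i ≤ 0) := by
      intro i
      rcases signed (Pi.single i 1) (aux_single_nonneg i) with h | h
      · left; intro k; have := h k; rwa [aux_col R i] at this
      · right; intro k; have := h k; rwa [aux_col R i] at this
    by_cases hpos : ∀ i j, 0 ≤ R i j
    · exact ⟨R, (2:ℝ)⁻¹ • Rᵀ, hpos, rfl, fun X => by rw [hstd X, aux_half]⟩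
    · by_cases hneg : ∀ i j, R i j ≤ 0
      · refine ⟨-R, (2:ℝ)⁻¹ • (-R)ᵀ, fun i j => by simpa using hneg i j, rfl, fun X => ?_⟩
        rw [hstd X, aux_half]
        simp
      · exfalso
        push_neg at hpos hneg
        obtain ⟨p, i, hpi⟩ := hpos
        obtain ⟨q, j, hqj⟩ := hneg
        have hci : ∀ k, R k i ≤ 0 := by
          rcases colsigned i with h | h
          · exact absurd (h p) (not_le.mpr hpi)
          · exact h
        have hcj : ∀ k, 0 ≤ R k j := by
          rcases colsigned j with h | h
          · exact h
          · exact absurd hqj (not_lt.mpr (h q))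
        have hij : i ≠ j := fun he => absurd (hcj p) (not_le.mpr (he ▸ hpi))
        obtain ⟨r, hr, hEq⟩ := aux_signed_ratio (fun k => R k j) (fun k => -R k i)
          hcj (fun k => neg_nonneg.mpr (hci k))
          (by
            intro h0
            have h2 : -R p i = 0 := congrFun h0 p
            linarith)
          (by
            intro t ht
            set x : Fin n → ℝ := (Pi.single j 1 : Fin n → ℝ) + t • (Pi.single i 1 : Fin n → ℝ)
              with hxdef
            have hx : ∀ k, 0 ≤ x k := by
              intro k
              simp only [hxdef, Pi.add_apply, Pi.smul_apply, smul_eq_mul]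
              exact add_nonneg (aux_single_nonneg j k)
                (mul_nonneg ht.le (aux_single_nonneg i k))
            have hRx : R *ᵥ x = fun k => R k j + t * R k i := by
              funext k
              rw [hxdef]
              simp [Matrix.mulVec_add, Matrix.mulVec_smul, aux_col R i, aux_col R j]
            rcases signed x hx with h1 | h1
            · left; intro k; have := h1 k; rw [hRx] at this
              show 0 ≤ R k j - t * -R k i
              simp only at this
              linarith
            · right; intro k; have := h1 k; rw [hRx] at this
              show R k j - t * -R k i ≤ 0
              simp only at this
              linarith)
        have hzero : R *ᵥ ((Pi.single j 1 : Fin n → ℝ) + r • (Pi.single i 1 : Fin n → ℝ)) = 0 := by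
          funext k
          have hk := congrFun hEq k
          simp only [Matrix.mulVec_add, Matrix.mulVec_smul, aux_col R i, aux_col R j,
            Pi.add_apply, Pi.smul_apply, smul_eq_mul, Pi.zero_apply]
          linarith
        have h0 := hRinj _ hzero
        have h1 := congrFun h0 j
        simp [Pi.single_apply, hij, Ne.symm hij] at h1
  · intro _hn4 hAB
    obtain ⟨A, B, hB, hform⟩ := hAB
    rcases Nat.eq_zero_or_pos n with hn | hn
    · subst hn
      exact ⟨0, fun X => by ext i j; exact i.elim0⟩
    obtain ⟨u0, hu0⟩ := hB
    have hCB : ((↑u0⁻¹ : Matrix (Fin n) (Fin n) ℝ))ᵀ * Bᵀ = 1 := by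
      rw [← Matrix.transpose_mul, ← hu0, u0.mul_inv, Matrix.transpose_one]
    have hBtinj : ∀ x : Fin n → ℝ, Bᵀ *ᵥ x = 0 → x = 0 := by
      intro x hx
      calc x = (1 : Matrix (Fin n) (Fin n) ℝ) *ᵥ x := (Matrix.one_mulVec x).symm
        _ = (((↑u0⁻¹ : Matrix (Fin n) (Fin n) ℝ))ᵀ * Bᵀ) *ᵥ x := by rw [hCB]
        _ = ((↑u0⁻¹ : Matrix (Fin n) (Fin n) ℝ))ᵀ *ᵥ (Bᵀ *ᵥ x) := by
              rw [← Matrix.mulVec_mulVec]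
        _ = 0 := by rw [hx, Matrix.mulVec_zero]
    have key : ∀ x : Fin n → ℝ, (∀ k, 0 ≤ x k) → x ≠ 0 →
        ∃ c : ℝ, 0 ≤ c ∧ A *ᵥ x = c • (Bᵀ *ᵥ x) := by
      intro x hx hx0
      have hv : Bᵀ *ᵥ x ≠ 0 := fun h => hx0 (hBtinj x h)
      refine aux_parallel (A *ᵥ x) (Bᵀ *ᵥ x) hv ?_
      intro z
      have hmem := hL _ (aux_sqmat_mem_CP x hx)
      have hqf := aux_cp_quadform hmem z
      have hco : ((⟨Matrix.of fun i j => x i * x j, aux_sqmat_isSymm x⟩ : SymMat n) :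
          Matrix (Fin n) (Fin n) ℝ) = Matrix.of fun i j => x i * x j := rfl
      rw [hform, hco] at hqf
      have e1 : A * (Matrix.of fun i j => x i * x j) * B
            + Bᵀ * (Matrix.of fun i j => x i * x j) * Aᵀ
          = Matrix.of fun k l => (A *ᵥ x) k * (Bᵀ *ᵥ x) l + (Bᵀ *ᵥ x) k * (A *ᵥ x) l := by
        rw [aux_mul_sqmat_mul, aux_mul_sqmat_mul, Matrix.transpose_transpose]
        ext k l
        simp
      rw [e1] at hqf
      simp only [Matrix.of_apply] at hqf
      have e2 : ∑ k, ∑ l, z k * (((A *ᵥ x) k * (Bᵀ *ᵥ x) l + (Bᵀ *ᵥ x) k * (A *ᵥ x) l) * z l)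
          = (z ⬝ᵥ (A *ᵥ x)) * (z ⬝ᵥ (Bᵀ *ᵥ x)) + (z ⬝ᵥ (Bᵀ *ᵥ x)) * (z ⬝ᵥ (A *ᵥ x)) := by
        simp only [dotProduct]
        rw [Finset.sum_mul_sum, Finset.sum_mul_sum, ← Finset.sum_add_distrib]
        refine Finset.sum_congr rfl fun k _ => ?_
        rw [← Finset.sum_add_distrib]
        exact Finset.sum_congr rfl fun l _ => by ring
      rw [e2] at hqf
      nlinarith [hqf]
    choose c hc0 hc using fun i : Fin n =>
      key (Pi.single i 1) (aux_single_nonneg i)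
        (fun h => by have := congrFun h i; simp at this)
    have hpair : ∀ i j : Fin n, i ≠ j → c i = c j := by
      intro i j hij
      obtain ⟨c', _, hc'⟩ := key ((Pi.single i 1 : Fin n → ℝ) + (Pi.single j 1 : Fin n → ℝ))
        (fun k => add_nonneg (aux_single_nonneg i k) (aux_single_nonneg j k))
        (fun h => by
          have := congrFun h i
          simp [Pi.single_apply, hij, Ne.symm hij] at this)
      have habc : ∀ (a b cc d : Fin n → ℝ), a + b = cc + d → a - cc + (b - d) = 0 :=
        fun a b cc d h => by rw [sub_add_sub_comm, h, sub_self]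
      have hvw : Bᵀ *ᵥ ((c i - c') • (Pi.single i 1 : Fin n → ℝ)
          + (c j - c') • (Pi.single j 1 : Fin n → ℝ)) = 0 := by
        rw [Matrix.mulVec_add, Matrix.mulVec_smul, Matrix.mulVec_smul]
        rw [Matrix.mulVec_add, Matrix.mulVec_add] at hc'
        rw [hc i, hc j] at hc'
        rw [smul_add] at hc'
        rw [sub_smul, sub_smul]
        exact habc _ _ _ _ hc'
      have h0 := hBtinj _ hvw
      have h1 := congrFun h0 i
      have h2 := congrFun h0 j
      simp [Pi.single_apply, hij, Ne.symm hij] at h1 h2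
      linarith
    set i0 : Fin n := ⟨0, hn⟩ with hi0
    have hcall : ∀ i, c i = c i0 := by
      intro i
      rcases eq_or_ne i i0 with h | h
      · rw [h]
      · exact hpair i i0 h
    have hA : A = c i0 • Bᵀ := by
      ext k i
      have h1 : A k i = c i * Bᵀ k i := by
        have h2 := congrFun (hc i) k
        rw [aux_col A i, aux_col Bᵀ i] at h2
        simpa using h2
      rw [Matrix.smul_apply, h1, hcall i, smul_eq_mul]
    have hc0pos : 0 < c i0 := by
      rcases lt_or_eq_of_le (hc0 i0) with h | h
      · exact h
      · exfalso
        have hA0 : A = 0 := by rw [hA, ← h, zero_smul]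
        set X1 : SymMat n := ⟨(1 : Matrix (Fin n) (Fin n) ℝ), Matrix.isSymm_one⟩ with hX1
        have hLX1 : (L X1 : Matrix (Fin n) (Fin n) ℝ) = 0 := by
          rw [hform, hA0]
          simp
        have hX10 : X1 = 0 := hinv.1 (by rw [map_zero]; exact Subtype.ext hLX1)
        have h11 := congrArg (fun Y : SymMat n => (Y : Matrix (Fin n) (Fin n) ℝ) i0 i0) hX10
        simp [hX1, Matrix.one_apply] at h11
    refine ⟨Real.sqrt (2 * c i0) • Bᵀ, fun X => ?_⟩
    have hs : Real.sqrt (2 * c i0) * Real.sqrt (2 * c i0) = 2 * c i0 :=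
      Real.mul_self_sqrt (by linarith)
    rw [hform X, hA]
    simp only [Matrix.transpose_smul, Matrix.transpose_transpose, Matrix.smul_mul,
      Matrix.mul_smul, smul_smul]
    rw [hs, ← add_smul]
    congr 1
    ring
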